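/- Let K be a finite-dimensional complex inner product space, U : K → K a unitary linear map, H ⊆ K a subspace with orthogonal projection P : K → K onto H, and T : H → H a linear map. Suppose that for every integer k ≥ 1 and every x ∈ H, T^k x = P (U^k x) (i.e. U is a unitary power dilation of T). Then T is unitary on H: ‖T x‖ = ‖x‖ for all x ∈ H and T is surjective. Equivalently, a contraction on a finite-dimensional space admitting a unitary power dilation on a finite-dimensional space is itself unitary. -/

import Mathlib

/-- Powers of a linear isometry are isometric. -/
lemma pow_isometry_aux {K : Type*} [NormedAddCommGroup K] [InnerProductSpace ℂ K]
    (U : K →ₗ[ℂ] K) (hU_iso : ∀ x : K, ‖U x‖ = ‖x‖) :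
    ∀ (m : ℕ) (y : K), ‖(U ^ m) y‖ = ‖y‖ := by
  intro m
  induction m with
  | zero => intro y; simp
  | succ n ih =>
      intro y
      rw [pow_succ, Module.End.mul_apply, ih, hU_iso]

/-- Almost periodicity: in finite dimension, some power of a unitary is close to the identity
pointwise. -/
lemma exists_pow_close {K : Type*} [NormedAddCommGroup K] [InnerProductSpace ℂ K]
    [FiniteDimensional ℂ K]
    (U : K →ₗ[ℂ] K) (hU_iso : ∀ x : K, ‖U x‖ = ‖x‖) (x : K) {ε : ℝ} (hε : 0 < ε) :
    ∃ k : ℕ, 1 ≤ k ∧ ‖(U ^ k) x - x‖ < ε := by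
  have hisom := pow_isometry_aux U hU_iso
  -- the sequence U^n x is bounded, so it has a convergent subsequence
  have hbdd : Bornology.IsBounded (Metric.closedBall (0 : K) ‖x‖) :=
    Metric.isBounded_closedBall
  have hmem : ∀ n : ℕ, (U ^ n) x ∈ Metric.closedBall (0 : K) ‖x‖ := by
    intro n
    simp [Metric.mem_closedBall, dist_eq_norm, hisom n x]
  obtain ⟨a, _, φ, hφ, hconv⟩ :=
    (isCompact_closedBall (0 : K) ‖x‖).tendsto_subseq hmem
  rw [Metric.tendsto_atTop] at hconv
  obtain ⟨N, hN⟩ := hconv (ε / 2) (half_pos hε)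
  refine ⟨φ (N + 1) - φ N, ?_, ?_⟩
  · have : φ N < φ (N + 1) := hφ (Nat.lt_succ_self N)
    omega
  · have hle : φ N ≤ φ (N + 1) := (hφ (Nat.lt_succ_self N)).le
    have key : (U ^ φ N) ((U ^ (φ (N + 1) - φ N)) x - x)
        = (U ^ φ (N + 1)) x - (U ^ φ N) x := by
      have hadd : φ N + (φ (N + 1) - φ N) = φ (N + 1) := by omega
      rw [map_sub, ← Module.End.mul_apply, ← pow_add, hadd]
    have : ‖(U ^ (φ (N + 1) - φ N)) x - x‖
        = ‖(U ^ φ (N + 1)) x - (U ^ φ N) x‖ := by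
      rw [← key, hisom]
    rw [this]
    have h1 := hN (N + 1) (Nat.le_succ N)
    have h2 := hN N le_rfl
    have := dist_triangle ((U ^ φ (N + 1)) x) a ((U ^ φ N) x)
    rw [dist_comm a ((U ^ φ N) x)] at this
    calc ‖(U ^ φ (N + 1)) x - (U ^ φ N) x‖
        = dist ((U ^ φ (N + 1)) x) ((U ^ φ N) x) := (dist_eq_norm _ _).symm
      _ ≤ dist ((U ^ φ (N + 1)) x) a + dist ((U ^ φ N) x) a := by
          simpa [dist_comm] using this
      _ < ε / 2 + ε / 2 := by
          exact add_lt_add (by simpa [Function.comp] using h1)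
            (by simpa [Function.comp] using h2)
      _ = ε := add_halves ε

/-- a contraction on a finite-dimensional complex inner product space that
admits a unitary power dilation acting on a finite-dimensional space is itself unitary:
if `U` is a unitary on `K`, `H ⊆ K` a subspace with orthogonal projection `P`, and
`T : H → H` satisfies `T^k x = P (U^k x)` for all `k ≥ 1`, then `T` is a surjective
isometry. -/
theorem power_dilation_finite_dim_forces_unitary
    (K : Type*) [NormedAddCommGroup K] [InnerProductSpace ℂ K] [FiniteDimensional ℂ K]
    (U : K →ₗ[ℂ] K) (hU_iso : ∀ x : K, ‖U x‖ = ‖x‖) (hU_surj : Function.Surjective U)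
    (H : Submodule ℂ K)
    (T : H →ₗ[ℂ] H)
    (hdil : ∀ (k : ℕ), 1 ≤ k → ∀ x : H,
      (T ^ k) x = Submodule.orthogonalProjection H ((U ^ k) (x : K))) :
    (∀ x : H, ‖T x‖ = ‖x‖) ∧ Function.Surjective T := by
  have hisom := pow_isometry_aux U hU_iso
  -- the orthogonal projection is a contraction
  have hP : ∀ z : K, ‖(Submodule.orthogonalProjection H z : K)‖ ≤ ‖z‖ := by
    intro z
    rw [Submodule.norm_coe]
    calc ‖Submodule.orthogonalProjection H z‖ ≤ ‖Submodule.orthogonalProjection H‖ * ‖z‖ :=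
          (Submodule.orthogonalProjection H).le_opNorm z
      _ ≤ 1 * ‖z‖ := by
          exact mul_le_mul_of_nonneg_right (Submodule.orthogonalProjection_norm_le H) (norm_nonneg z)
      _ = ‖z‖ := one_mul ‖z‖
  -- T is a contraction
  have hcontr : ∀ y : H, ‖T y‖ ≤ ‖y‖ := by
    intro y
    have h := hdil 1 le_rfl y
    simp only [pow_one] at h
    calc ‖T y‖ = ‖((Submodule.orthogonalProjection H) (U (y : K)) : K)‖ := by
            rw [h, Submodule.norm_coe]
      _ ≤ ‖U (y : K)‖ := hP _
      _ = ‖(y : K)‖ := hU_iso _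
      _ = ‖y‖ := rfl
  -- powers of T are contractions
  have hpow : ∀ (k : ℕ) (y : H), ‖(T ^ k) y‖ ≤ ‖y‖ := by
    intro k
    induction k with
    | zero => intro y; simp
    | succ n ih =>
        intro y
        rw [pow_succ, Module.End.mul_apply]
        exact le_trans (ih (T y)) (hcontr y)
  -- T^k x is at most ‖T x‖ for k ≥ 1
  have hmono : ∀ (k : ℕ), 1 ≤ k → ∀ x : H, ‖(T ^ k) x‖ ≤ ‖T x‖ := by
    intro k hk x
    obtain ⟨m, rfl⟩ : ∃ m, k = m + 1 := ⟨k - 1, by omega⟩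
    rw [pow_succ, Module.End.mul_apply]
    exact hpow m (T x)
  have hiso : ∀ x : H, ‖T x‖ = ‖x‖ := by
    intro x
    refine le_antisymm (hcontr x) ?_
    by_contra hlt
    push_neg at hlt
    set ε := ‖x‖ - ‖T x‖ with hε
    have hεpos : 0 < ε := by linarith
    obtain ⟨k, hk1, hkε⟩ := exists_pow_close U hU_iso (x : K) hεpos
    -- T^k x is ε-close to x
    have hclose : ‖(T ^ k) x - x‖ < ε := by
      have h := hdil k hk1 x
      have hx : (Submodule.orthogonalProjection H) ((x : H) : K) = x :=
        Submodule.orthogonalProjection_mem_subspace_eq_self x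
      have : (T ^ k) x - x = (Submodule.orthogonalProjection H) ((U ^ k) (x : K) - (x : K)) := by
        rw [map_sub, h, hx]
      calc ‖(T ^ k) x - x‖
          = ‖((Submodule.orthogonalProjection H) ((U ^ k) (x : K) - (x : K)) : K)‖ := by
            rw [this, Submodule.norm_coe]
        _ ≤ ‖(U ^ k) (x : K) - (x : K)‖ := hP _
        _ < ε := hkε
    have h1 : ‖x‖ ≤ ‖(T ^ k) x‖ + ‖(T ^ k) x - x‖ := by
      have := norm_sub_norm_le ((T ^ k) x) x
      have habs := abs_norm_sub_norm_le ((T ^ k) x) x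
      have := abs_le.mp habs
      linarith [this.1]
    have h2 := hmono k hk1 x
    have : ‖x‖ < ‖(T ^ k) x‖ + ε := by linarith
    linarith
  refine ⟨hiso, ?_⟩
  have hinj : Function.Injective T := by
    rw [← LinearMap.ker_eq_bot, LinearMap.ker_eq_bot']
    intro m hm
    have : ‖m‖ = 0 := by rw [← hiso m, hm, norm_zero]
    exact norm_eq_zero.mp this
  exact (LinearMap.injective_iff_surjective).mp hinj
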